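/- For every n ≥ 1, the string M_n produced by the recursive construction has length exactly ∑_{k=1}^n k!. -/

import Mathlib

/-- All length-`n` windows of `s`. -/
def windows (n : ℕ) (s : List ℕ) : List (List ℕ) :=
  (List.range (s.length + 1 - n)).map fun i => (s.drop i).take n

/-- The permutations of `{1,…,n}` in order of first appearance as substrings of `s`. -/
def permsOrder (n : ℕ) (s : List ℕ) : List (List ℕ) :=
  (((windows n s).filter fun w => decide (w.Perm (List.range' 1 n))).reverse.dedup).reverse

/-- Length of the maximal overlap: the longest suffix of `s` that is a prefix of `t`. -/
def ov (s t : List ℕ) : ℕ :=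
  ((List.range (min s.length t.length + 1)).filter fun l => (t.take l).isSuffixOf s).foldr max 0

/-- Concatenate with maximal overlap. -/
def mergeOv (s t : List ℕ) : List ℕ := s ++ t.drop (ov s t)

/-- The recursively constructed superpermutation `M_n`. -/
def Mrec : ℕ → List ℕ
  | 0 => []
  | 1 => [1]
  | n + 2 =>
      ((permsOrder (n + 1) (Mrec (n + 1))).map fun P => P ++ [n + 2] ++ P).foldl mergeOv []

open List

namespace SuperPerm

/-- Condition on adjacent permutations in the representation. -/
def Step (n : ℕ) (P : List ℕ) (g : ℕ) (P' : List ℕ) : Prop :=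
  1 ≤ g ∧ g ≤ n ∧ P.drop g = P'.take (n - g) ∧
  (∀ l, n - g < l → l ≤ n → P.drop (n - l) ≠ P'.take l) ∧
  (2 ≤ g → P.head? = some n ∧ P'.getLast? = some n)

/-- Chain of `Step`s along a list of permutations and gaps. -/
def Chain2 (R : List ℕ → ℕ → List ℕ → Prop) : List (List ℕ) → List ℕ → Prop
  | [], [] => True
  | [_], [] => True
  | P :: P' :: Ps, g :: gs => R P g P' ∧ Chain2 R (P' :: Ps) gs
  | _, _ => False

/-- Assemble a string from overlapping permutations. -/
def asm (n : ℕ) : List (List ℕ) → List ℕ → List ℕ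
  | [], _ => []
  | P :: Ps, gs => P ++ (List.zipWith (fun g P' => P'.drop (n - g)) gs Ps).flatten

structure Rep (n : ℕ) (M : List ℕ) (Ps : List (List ℕ)) (gs : List ℕ) : Prop where
  perm : ∀ P ∈ Ps, P.Perm (List.range' 1 n)
  nodup : Ps.Nodup
  count : Ps.length = n.factorial
  glen : gs.length + 1 = Ps.length
  chain : Chain2 (Step n) Ps gs
  meq : M = asm n Ps gs
  mlen : M.length = ∑ k ∈ Finset.Icc 1 n, Nat.factorial k

lemma perm_length {n : ℕ} {P : List ℕ} (h : P.Perm (List.range' 1 n)) : P.length = n := by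
  simpa using h.length_eq

lemma perm_mem_le {n : ℕ} {P : List ℕ} (h : P.Perm (List.range' 1 n)) {x : ℕ} (hx : x ∈ P) :
    x ≤ n := by
  have := h.mem_iff.mp hx
  rw [List.mem_range'] at this
  omega

lemma perm_not_mem_succ {n : ℕ} {P : List ℕ} (h : P.Perm (List.range' 1 n)) : n + 1 ∉ P := by
  intro hx; have := perm_mem_le h hx; omega

lemma perm_count_top {n : ℕ} {P : List ℕ} (hn : 1 ≤ n) (h : P.Perm (List.range' 1 n)) :
    P.count n = 1 := by
  rw [h.count_eq]
  exact List.count_eq_one_of_mem (List.nodup_range' (s := 1) (n := n))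
    (by rw [List.mem_range']; exact ⟨n - 1, by omega, by omega⟩)

lemma perm_mem_top {n : ℕ} {P : List ℕ} (hn : 1 ≤ n) (h : P.Perm (List.range' 1 n)) : n ∈ P := by
  have := perm_count_top hn h
  exact List.count_pos_iff.mp (by omega)

lemma foldr_max_eq {L : List ℕ} {o : ℕ} (h1 : o ∈ L) (h2 : ∀ x ∈ L, x ≤ o) :
    L.foldr max 0 = o := by
  apply Nat.le_antisymm
  · clear h1
    induction L with
    | nil => simp
    | cons a L ih =>
      simp only [List.foldr_cons]
      have := h2 a (by simp)
      have hle : L.foldr max 0 ≤ o := ih (fun x hx => h2 x (by simp [hx]))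
      omega
  · induction L with
    | nil => simp at h1
    | cons a L ih =>
      simp only [List.foldr_cons]
      rcases List.mem_cons.mp h1 with rfl | h
      · exact le_max_left _ _
      · exact le_trans (ih h (fun x hx => h2 x (by simp [hx]))) (le_max_right _ _)

lemma ov_eq {s t : List ℕ} {o : ℕ} (h0 : o ≤ min s.length t.length)
    (h1 : t.take o <:+ s)
    (h2 : ∀ l, l ≤ min s.length t.length → t.take l <:+ s → l ≤ o) :
    ov s t = o := by
  unfold ov
  apply foldr_max_eq
  · rw [List.mem_filter]
    refine ⟨by rw [List.mem_range]; omega, ?_⟩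
    simpa [List.isSuffixOf_iff_suffix] using h1
  · intro x hx
    rw [List.mem_filter, List.mem_range] at hx
    exact h2 x (by omega) (by simpa [List.isSuffixOf_iff_suffix] using hx.2)

lemma mergeOv_eq {s t : List ℕ} {o : ℕ} (h0 : o ≤ min s.length t.length)
    (h1 : t.take o <:+ s)
    (h2 : ∀ l, l ≤ min s.length t.length → t.take l <:+ s → l ≤ o) :
    mergeOv s t = s ++ t.drop o := by
  unfold mergeOv; rw [ov_eq h0 h1 h2]


lemma not_perm_of_not_mem {n : ℕ} {w : List ℕ} (hn : 1 ≤ n) (h : n ∉ w) :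
    ¬ w.Perm (List.range' 1 n) := fun hp => h (perm_mem_top hn hp)

lemma windows_split {n : ℕ} {c M' : List ℕ} (h : n ≤ M'.length) :
    windows n (c ++ M') =
      (List.range c.length).map (fun i => (((c : List ℕ) ++ M').drop i).take n) ++ windows n M' := by
  unfold windows
  have hlen : (c ++ M').length + 1 - n = c.length + (M'.length + 1 - n) := by
    simp only [List.length_append]; omega
  rw [hlen, List.range_add, List.map_append, List.map_map]
  congr 1
  apply List.map_congr_left
  intro i _
  simp only [Function.comp_apply, List.drop_length_add_append]

lemma not_mem_drop_of_head {n q : ℕ} {P : List ℕ} (hq : 1 ≤ q)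
    (hh : P.head? = some n) (hc : P.count n = 1) : n ∉ P.drop q := by
  match P, hh with
  | (x :: t), hh =>
    simp only [List.head?_cons, Option.some.injEq] at hh
    subst hh
    intro hmem
    have h1 : (x :: t).drop q <+ t := by
      have : (x :: t).drop q = t.drop (q - 1) := by
        have : q = (q - 1) + 1 := by omega
        rw [this]; simp [List.drop_succ_cons]
      rw [this]; exact List.drop_sublist _ _
    have h2 : 1 ≤ t.count x := List.count_pos_iff.mpr (h1.mem hmem)
    simp only [List.count_cons_self] at hc
    omega

lemma not_mem_take_of_getLast {n q : ℕ} {P : List ℕ} (hq : q ≤ P.length - 1)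
    (hl : P.getLast? = some n) (hP : 1 ≤ P.length) (hc : P.count n = 1) : n ∉ P.take q := by
  intro hmem
  have hne : P ≠ [] := by intro h; subst h; simp at hP
  have hlast : P.getLast hne = n := by
    rw [List.getLast?_eq_getLast hne] at hl; injection hl
  have hsplit : P.dropLast ++ [n] = P := by rw [← hlast]; exact List.dropLast_append_getLast hne
  have hcnt : P.dropLast.count n = 0 := by
    have := hc
    rw [← hsplit, List.count_append] at this
    simpa using this
  have hq' : q ≤ P.dropLast.length := by
    rw [List.length_dropLast]; omega
  have htake : P.take q = P.dropLast.take q := by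
    conv_lhs => rw [← hsplit]
    exact List.take_append_of_le_length hq'
  rw [htake] at hmem
  exact (List.count_eq_zero.mp hcnt) ((List.take_prefix q _).sublist.mem hmem)


lemma asm_cons {n g : ℕ} {P P' : List ℕ} {Ps : List (List ℕ)} {gs : List ℕ}
    (hcompat : P.drop g = P'.take (n - g)) :
    asm n (P :: P' :: Ps) (g :: gs) = P.take g ++ asm n (P' :: Ps) gs := by
  simp only [asm, List.zipWith_cons_cons, List.flatten_cons]
  conv_lhs => rw [← List.take_append_drop g P, hcompat]
  rw [List.append_assoc, ← List.append_assoc (P'.take (n-g)), List.take_append_drop]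

lemma filter_windows {n : ℕ} (hn : 1 ≤ n) :
    ∀ (Ps : List (List ℕ)) (gs : List ℕ),
      (∀ P ∈ Ps, P.Perm (List.range' 1 n)) → Chain2 (Step n) Ps gs →
      gs.length + 1 = Ps.length →
      (windows n (asm n Ps gs)).filter (fun w => decide (w.Perm (List.range' 1 n))) = Ps := by
  intro Ps
  induction Ps with
  | nil => intro gs _ _ hlen; simp at hlen
  | cons P Ps ih =>
    intro gs hperm hchain hlen
    have hperm0 := hperm P List.mem_cons_self
    have hP : P.length = n := perm_length hperm0
    match Ps, gs with
    | [], [] =>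
      have hasm : asm n [P] [] = P := by simp [asm]
      rw [hasm]
      unfold windows
      have h1 : P.length + 1 - n = 1 := by omega
      rw [h1, show List.range 1 = [0] from rfl, List.map_singleton, List.drop_zero, List.take_of_length_le (by omega)]
      simp [List.filter_cons, hperm0]
    | [], g :: gs => simp at hlen
    | P' :: Ps, [] => simp at hlen
    | P' :: Ps, g :: gs =>
      obtain ⟨hstep, hchain'⟩ := hchain
      obtain ⟨hg1, hgn, hcompat, hmax, hgg⟩ := hstep
      have hperm1 := hperm P' (by simp)
      have hP' : P'.length = n := perm_length hperm1
      set M' := asm n (P' :: Ps) gs with hM'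
      have hM'len : n ≤ M'.length := by
        rw [hM']; simp only [asm, List.length_append]; omega
      have hA : asm n (P :: P' :: Ps) (g :: gs) = P.take g ++ M' := asm_cons hcompat
      rw [hA, windows_split hM'len, List.filter_append]
      have hrest : (windows n M').filter (fun w => decide (w.Perm (List.range' 1 n)))
          = P' :: Ps := ih gs (fun Q hQ => hperm Q (by simp [hQ])) hchain' (by simpa using hlen)
      rw [hrest]
      have hclen : (P.take g).length = g := by rw [List.length_take]; omega
      rw [hclen]
      obtain ⟨g0, rfl⟩ : ∃ g0, g = g0 + 1 := ⟨g - 1, by omega⟩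
      rw [List.range_succ_eq_map, List.map_cons, List.filter_cons]
      have hback : P.take (g0+1) ++ M' = P ++ (P'.drop (n - (g0+1)) ++
          (List.zipWith (fun g P' => P'.drop (n - g)) gs Ps).flatten) := by
        rw [← hA]; simp [asm]
      have hwin0 : ((P.take (g0+1) ++ M').drop 0).take n = P := by
        rw [List.drop_zero, hback, List.take_append_of_le_length (by omega),
          List.take_of_length_le (by omega)]
      rw [hwin0]
      simp only [hperm0, decide_eq_true_eq]
      have htail : List.filter (fun w => decide (w.Perm (List.range' 1 n)))
          (List.map (fun i => ((P.take (g0+1) ++ M').drop i).take n)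
            (List.map Nat.succ (List.range g0))) = [] := by
        rw [List.filter_eq_nil_iff]
        intro w hw
        rw [List.map_map, List.mem_map] at hw
        obtain ⟨i, hi, rfl⟩ := hw
        rw [List.mem_range] at hi
        simp only [Function.comp_apply]
        set q := Nat.succ i with hq
        have hq1 : 1 ≤ q := by omega
        have hqg : q ≤ g0 := by omega
        have hgg2 := hgg (by omega)
        -- compute the window
        have hdrop : (P.take (g0+1) ++ M').drop q
            = P.drop q ++ (P'.drop (n - (g0+1)) ++
              (List.zipWith (fun g P' => P'.drop (n - g)) gs Ps).flatten) := by
          rw [hback, List.drop_append_of_le_length (by omega)]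
        have hlen1 : (P.drop q).length = n - q := by rw [List.length_drop, hP]
        have htakeq : ((P.drop q) ++ (P'.drop (n - (g0+1)) ++
              (List.zipWith (fun g P' => P'.drop (n - g)) gs Ps).flatten)).take n
            = P.drop q ++ ((P'.drop (n - (g0+1)) ++
              (List.zipWith (fun g P' => P'.drop (n - g)) gs Ps).flatten)).take q := by
          have : n = (P.drop q).length + q := by omega
          rw [this, List.take_length_add_append]
        have htakeq2 : ((P'.drop (n - (g0+1)) ++
              (List.zipWith (fun g P' => P'.drop (n - g)) gs Ps).flatten)).take q
            = (P'.drop (n - (g0+1))).take q := by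
          apply List.take_append_of_le_length
          rw [List.length_drop, hP']; omega
        rw [decide_eq_true_eq]
        apply not_perm_of_not_mem hn
        rw [hdrop, htakeq, htakeq2, List.mem_append]
        rintro (hmem | hmem)
        · exact not_mem_drop_of_head hq1 hgg2.1 (perm_count_top hn hperm0) hmem
        · have : (P'.drop (n - (g0+1))).take q = (P'.take ((n - (g0+1)) + q)).drop (n - (g0+1)) := by
            rw [List.drop_take]
            congr 1
            omega
          rw [this] at hmem
          have hmem2 : n ∈ P'.take ((n - (g0+1)) + q) := (List.drop_sublist _ _).mem hmem
          exact not_mem_take_of_getLast (by omega) hgg2.2 (by omega)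
            (perm_count_top hn hperm1) hmem2
      rw [htail]
      simp

lemma permsOrder_eq {n : ℕ} {M : List ℕ} {Ps : List (List ℕ)} {gs : List ℕ}
    (hn : 1 ≤ n) (h : Rep n M Ps gs) : permsOrder n M = Ps := by
  unfold permsOrder
  rw [h.meq, filter_windows hn Ps gs h.perm h.chain h.glen,
    List.dedup_eq_self.mpr (List.nodup_reverse.mpr h.nodup), List.reverse_reverse]


/-! ### The construction of level `m+1` from level `m` -/

/-- `Q_j` built from a permutation. -/
def mkQ (m : ℕ) (P : List ℕ) : List ℕ := P ++ (m + 1) :: P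

/-- The `i`-th window of the block of `P`. -/
def Vf (m : ℕ) (P : List ℕ) (i : ℕ) : List ℕ := P.drop i ++ (m + 1) :: P.take i

/-- The block of windows contributed by one permutation. -/
def blk (m : ℕ) (P : List ℕ) : List (List ℕ) := (List.range (m + 1)).map (Vf m P)

/-- New permutation list. -/
def psAux (m : ℕ) (Ps : List (List ℕ)) : List (List ℕ) := Ps.flatMap (blk m)

/-- New gap list. -/
def gsAux (m : ℕ) : List ℕ → List ℕ
  | [] => List.replicate m 1
  | g :: gs => List.replicate m 1 ++ (g + 1) :: gsAux m gs

@[simp] lemma chain2_nil {R} : Chain2 R [] [] := trivial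
@[simp] lemma chain2_single {R x} : Chain2 R [x] [] := trivial
@[simp] lemma chain2_cons2 {R x y l g gs} :
    Chain2 R (x :: y :: l) (g :: gs) ↔ R x g y ∧ Chain2 R (y :: l) gs := Iff.rfl
@[simp] lemma chain2_cons2_nil {R x y l} : ¬ Chain2 R (x :: y :: l) [] := fun h => h
@[simp] lemma chain2_single_cons {R x g gs} : ¬ Chain2 R [x] (g :: gs) := fun h => h
@[simp] lemma chain2_nil_cons {R g gs} : ¬ Chain2 R [] (g :: gs) := fun h => h

lemma Vf_length {m : ℕ} {P : List ℕ} (hP : P.length = m) (i : ℕ) (hi : i ≤ m) :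
    (Vf m P i).length = m + 1 := by
  simp [Vf, List.length_append, List.length_drop, hP]
  omega

lemma Vf_zero {m : ℕ} (P : List ℕ) : Vf m P 0 = P ++ [m + 1] := by simp [Vf]

lemma Vf_top {m : ℕ} {P : List ℕ} (hP : P.length = m) : Vf m P m = (m + 1) :: P := by
  simp [Vf, ← hP, List.drop_length, List.take_length]

lemma suffix_of_append {u z v : List ℕ} (h : u <:+ z ++ v) (hl : u.length ≤ v.length) :
    u <:+ v := by
  rw [List.suffix_iff_eq_drop] at h ⊢
  have hlen : (z ++ v).length - u.length = z.length + (v.length - u.length) := by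
    rw [List.length_append]; omega
  rw [hlen, List.drop_length_add_append] at h
  exact h

/-- Injectivity of the block windows. -/
lemma Vf_inj {m : ℕ} {P P' : List ℕ} {i j : ℕ}
    (hP : P.Perm (List.range' 1 m)) (hP' : P'.Perm (List.range' 1 m))
    (hi : i ≤ m) (hj : j ≤ m) (heq : Vf m P i = Vf m P' j) : i = j ∧ P = P' := by
  have hPl : P.length = m := perm_length hP
  have hP'l : P'.length = m := perm_length hP'
  have hij : ∀ (Q Q' : List ℕ) (a b : ℕ), Q.length = m → Q'.length = m →
      Q'.Perm (List.range' 1 m) → a ≤ m → b ≤ m → a < b → Vf m Q a ≠ Vf m Q' b := by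
    intro Q Q' a b hQ hQ' hQ'p ha hb hab hVeq
    have h1 : (Vf m Q a)[m - a]? = some (m + 1) := by
      unfold Vf
      rw [List.getElem?_append_right (by rw [List.length_drop, hQ])]
      simp [List.length_drop, hQ]
    have h2 : (Vf m Q' b)[m - a]? = (Q'.take b)[b - a - 1]? := by
      unfold Vf
      rw [List.getElem?_append_right (by rw [List.length_drop, hQ']; omega)]
      have : m - a - (Q'.drop b).length = b - a := by rw [List.length_drop, hQ']; omega
      rw [this]
      have hba : b - a = (b - a - 1) + 1 := by omega
      rw [hba]
      simp
    rw [hVeq, h2] at h1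
    have hbm : b - a - 1 < (Q'.take b).length := by
      rw [List.length_take, hQ']
      have : b - a - 1 < b := by omega
      omega
    rw [List.getElem?_eq_getElem hbm] at h1
    have hmem : (m+1) ∈ Q'.take b := by
      have := List.getElem_mem hbm
      rw [Option.some_inj.mp h1] at this
      exact this
    exact perm_not_mem_succ hQ'p ((List.take_prefix b Q').sublist.mem hmem)
  have hije : i = j := by
    rcases Nat.lt_trichotomy i j with h | h | h
    · exact absurd heq (hij P P' i j hPl hP'l hP' hi hj h)
    · exact h
    · exact absurd heq.symm (hij P' P j i hP'l hPl hP hj hi h)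
  subst hije
  refine ⟨rfl, ?_⟩
  unfold Vf at heq
  have hlen : (P.drop i).length = (P'.drop i).length := by
    rw [List.length_drop, List.length_drop, hPl, hP'l]
  obtain ⟨h1, h2⟩ := List.append_inj heq hlen
  have h3 : P.take i = P'.take i := by injection h2
  calc P = P.take i ++ P.drop i := (List.take_append_drop i P).symm
    _ = P'.take i ++ P'.drop i := by rw [h1, h3]
    _ = P' := List.take_append_drop i P'

/-- Steps inside a block. -/
lemma step_inside {m : ℕ} {P : List ℕ} {i : ℕ} (hm : 1 ≤ m)
    (hP : P.Perm (List.range' 1 m)) (hi : i < m) :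
    Step (m + 1) (Vf m P i) 1 (Vf m P (i + 1)) := by
  have hPl : P.length = m := perm_length hP
  refine ⟨le_refl 1, by omega, ?_, ?_, by omega⟩
  · -- compatibility
    have hlhs : (Vf m P i).drop 1 = P.drop (i + 1) ++ (m + 1) :: P.take i := by
      unfold Vf
      rw [List.drop_append_of_le_length (by rw [List.length_drop, hPl]; omega),
        List.drop_drop]
    have hrhs : (Vf m P (i + 1)).take (m + 1 - 1) = P.drop (i + 1) ++ (m + 1) :: P.take i := by
      unfold Vf
      have hl : (P.drop (i+1)).length = m - i - 1 := by rw [List.length_drop, hPl]; omega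
      have : m + 1 - 1 = (P.drop (i+1)).length + (i + 1) := by omega
      rw [this, List.take_length_add_append]
      congr 1
      rw [List.take_succ_cons, List.take_take, Nat.min_eq_left (by omega)]
    rw [hlhs, hrhs]
  · -- maximality
    intro l hl1 hl2
    have : l = m + 1 := by omega
    subst this
    rw [Nat.sub_self, List.drop_zero, List.take_of_length_le (by rw [Vf_length hPl _ (by omega)])]
    intro heq
    obtain ⟨h, -⟩ := Vf_inj hP hP (by omega) (by omega) heq
    omega

/-- Steps between blocks. -/
lemma step_between {m g : ℕ} {P P' : List ℕ} (hm : 1 ≤ m)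
    (hP : P.Perm (List.range' 1 m)) (hP' : P'.Perm (List.range' 1 m))
    (hstep : Step m P g P') :
    Step (m + 1) (Vf m P m) (g + 1) (Vf m P' 0) := by
  have hPl : P.length = m := perm_length hP
  have hP'l : P'.length = m := perm_length hP'
  obtain ⟨hg1, hgn, hcompat, hmax, -⟩ := hstep
  rw [Vf_top hPl, Vf_zero]
  refine ⟨by omega, by omega, ?_, ?_, ?_⟩
  · -- compatibility
    rw [List.drop_succ_cons, List.take_append_of_le_length (by omega)]
    have : m + 1 - (g + 1) = m - g := by omega
    rw [this, hcompat]
  · -- maximality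
    intro l hl1 hl2
    rcases Nat.lt_or_ge l (m + 1) with hlm | hlm
    · have h1 : m + 1 - l = (m - l) + 1 := by omega
      rw [h1, List.drop_succ_cons, List.take_append_of_le_length (by omega)]
      exact hmax l (by omega) (by omega)
    · have : l = m + 1 := by omega
      subst this
      rw [Nat.sub_self, List.drop_zero, List.take_of_length_le (by simp [hP'l])]
      intro heq
      obtain ⟨x, t, rfl⟩ : ∃ x t, P' = x :: t := by
        cases P' with
        | nil => rw [List.length_nil] at hP'l; omega
        | cons x t => exact ⟨x, t, rfl⟩
      have : m + 1 = x := by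
        have := congrArg List.head? heq
        simpa using this
      have hxm : x ≤ m := perm_mem_le hP' (by simp)
      omega
  · -- g + 1 ≥ 2 clause
    intro _
    constructor
    · rfl
    · rw [List.getLast?_concat]


lemma mkQ_length {m : ℕ} {P : List ℕ} (hPl : P.length = m) : (mkQ m P).length = 2 * m + 1 := by
  simp [mkQ, hPl]; omega

lemma mergeOv_nil (t : List ℕ) : mergeOv [] t = t := by
  have h := mergeOv_eq (s := []) (t := t) (o := 0) (by simp) (by simp) (by simp)
  simpa using h

/-- The overlap between the accumulated string and the next `Q`. -/
lemma ov_step {m g : ℕ} {Z P P' : List ℕ} (hm : 1 ≤ m)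
    (hP : P.Perm (List.range' 1 m)) (hP' : P'.Perm (List.range' 1 m))
    (hstep : Step m P g P') :
    mergeOv (Z ++ mkQ m P) (mkQ m P') = (Z ++ mkQ m P) ++ (mkQ m P').drop (m - g) := by
  have hPl : P.length = m := perm_length hP
  have hP'l : P'.length = m := perm_length hP'
  have hQl : (mkQ m P).length = 2 * m + 1 := mkQ_length hPl
  have hQ'l : (mkQ m P').length = 2 * m + 1 := mkQ_length hP'l
  obtain ⟨hg1, hgn, hcompat, hmax, -⟩ := hstep
  apply mergeOv_eq
  · simp only [List.length_append, hQl, hQ'l]; omega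
  · -- the overlap is a suffix
    have ht : (mkQ m P').take (m - g) = P'.take (m - g) :=
      List.take_append_of_le_length (by omega)
    rw [ht, ← hcompat]
    have h1 : P.drop g <:+ P := List.drop_suffix g P
    have h2 : P <:+ mkQ m P := by
      have : mkQ m P = (P ++ [m + 1]) ++ P := by simp [mkQ]
      rw [this]; exact List.suffix_append _ _
    exact (h1.trans h2).trans (List.suffix_append Z (mkQ m P))
  · -- maximality
    intro l hl hsuf
    by_contra hlg
    push_neg at hlg
    have hl' : l ≤ 2 * m + 1 := by
      simp only [List.length_append, hQl, hQ'l] at hl; omega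
    have hll : ((mkQ m P').take l).length = l := by rw [List.length_take]; omega
    have hsuf' : (mkQ m P').take l <:+ mkQ m P := suffix_of_append hsuf (by omega)
    rw [List.suffix_iff_eq_drop, hll, hQl] at hsuf'
    rcases le_or_gt l m with hlm | hlm
    · -- l ≤ m : contradicts maximality at level m
      have h1 : (mkQ m P').take l = P'.take l := List.take_append_of_le_length (by omega)
      have h2 : (2 * m + 1 - l) = (m + 1) + (m - l) := by omega
      have h3 : List.drop (2 * m + 1 - l) (mkQ m P) = P.drop (m - l) := by
        have hmk : mkQ m P = (P ++ [m + 1]) ++ P := by simp [mkQ]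
        have hd := List.drop_length_add_append (l₁ := P ++ [m + 1]) (l₂ := P) (m - l)
        rw [show (P ++ [m + 1]).length = m + 1 by simp [hPl]] at hd
        rw [hmk, h2]
        exact hd
      rw [h1, h3] at hsuf'
      exact hmax l (by omega) hlm hsuf'.symm
    · rcases Nat.lt_or_ge l (2 * m + 1) with hl2 | hl2
      · -- m < l ≤ 2m : index m is the letter m+1 on the left but not on the right
        have h1 : ((mkQ m P').take l)[m]? = some (m + 1) := by
          rw [List.getElem?_take_of_lt (by omega)]
          unfold mkQ
          rw [List.getElem?_append_right (by omega)]
          simp [hP'l]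
        have h2 : (List.drop (2 * m + 1 - l) (mkQ m P))[m]? = (mkQ m P)[3 * m + 1 - l]? := by
          rw [List.getElem?_drop]
          congr 1
          omega
        have h3 : (mkQ m P)[3 * m + 1 - l]? = P[3 * m + 1 - l - (m + 1)]? := by
          unfold mkQ
          rw [List.getElem?_append_right (by omega)]
          have : 3 * m + 1 - l - P.length = (3 * m + 1 - l - P.length - 1) + 1 := by
            rw [hPl]; omega
          rw [this, List.getElem?_cons_succ]
          congr 1
          omega
        rw [hsuf', h2, h3] at h1
        have hidx : 3 * m + 1 - l - (m + 1) < P.length := by rw [hPl]; omega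
        rw [List.getElem?_eq_getElem hidx] at h1
        have : (m + 1) ∈ P := by
          have hmem := List.getElem_mem hidx
          rwa [Option.some_inj.mp h1] at hmem
        exact perm_not_mem_succ hP this
      · -- l = 2m+1 : would force P = P'
        have hl3 : l = 2 * m + 1 := by omega
        subst hl3
        rw [Nat.sub_self, List.drop_zero, List.take_of_length_le (by omega)] at hsuf'
        have heq : P' ++ (m + 1) :: P' = P ++ (m + 1) :: P := hsuf'
        obtain ⟨h4, -⟩ := List.append_inj heq (by rw [hPl, hP'l])
        have := hmax m (by omega) (le_refl m)
        rw [Nat.sub_self, List.drop_zero, List.take_of_length_le (by omega)] at this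
        exact this h4.symm

lemma merge_shift {m g : ℕ} {P P' : List ℕ} (hPl : P.length = m) (hP'l : P'.length = m)
    (hgn : g ≤ m) (hcompat : P.drop g = P'.take (m - g)) :
    mkQ m P ++ (mkQ m P').drop (m - g) = (P ++ (m + 1) :: P.take g) ++ mkQ m P' := by
  have h1 : (mkQ m P').drop (m - g) = P'.drop (m - g) ++ (m + 1) :: P' := by
    unfold mkQ
    rw [List.drop_append_of_le_length (by omega)]
  have key : P ++ (P'.drop (m - g) ++ (m + 1) :: P') = P.take g ++ mkQ m P' := by
    conv_lhs => rw [← List.take_append_drop g P, hcompat]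
    rw [List.append_assoc, ← List.append_assoc (P'.take (m - g)), List.take_append_drop]
    rfl
  simp only [mkQ] at key
  rw [h1]
  unfold mkQ
  simp only [List.append_assoc, List.cons_append]
  rw [key]

/-- The fold of the merges. -/
lemma foldl_merge {m : ℕ} (hm : 1 ≤ m) :
    ∀ (Ps : List (List ℕ)) (gs : List ℕ) (P : List ℕ) (Z : List ℕ),
      (∀ Q ∈ P :: Ps, Q.Perm (List.range' 1 m)) → Chain2 (Step m) (P :: Ps) gs →
      (Ps.map (mkQ m)).foldl mergeOv (Z ++ mkQ m P)
        = Z ++ mkQ m P ++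
          (List.zipWith (fun g P' => (mkQ m P').drop (m - g)) gs Ps).flatten := by
  intro Ps
  induction Ps with
  | nil =>
    intro gs P Z _ hchain
    cases gs with
    | nil => simp
    | cons g gs => exact absurd hchain (by simp)
  | cons P' Ps ih =>
    intro gs P Z hperm hchain
    cases gs with
    | nil => exact absurd hchain (by simp)
    | cons g gs =>
      obtain ⟨hstep, hchain'⟩ := hchain
      have hP := hperm P (by simp)
      have hP' := hperm P' (by simp)
      have hPl := perm_length hP
      have hP'l := perm_length hP'
      have h2 := merge_shift hPl hP'l hstep.2.1 hstep.2.2.1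
      rw [List.map_cons, List.foldl_cons, ov_step hm hP hP' hstep]
      have hshift : (Z ++ mkQ m P) ++ (mkQ m P').drop (m - g)
          = (Z ++ (P ++ (m + 1) :: P.take g)) ++ mkQ m P' := by
        rw [List.append_assoc Z, h2, ← List.append_assoc]
      rw [hshift, ih gs P' _ (fun Q hQ => hperm Q (List.mem_cons_of_mem _ hQ)) hchain',
        List.zipWith_cons_cons, List.flatten_cons]
      calc (Z ++ (P ++ (m + 1) :: P.take g)) ++ mkQ m P' ++
            (List.zipWith (fun g P' => (mkQ m P').drop (m - g)) gs Ps).flatten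
          = Z ++ ((P ++ (m + 1) :: P.take g) ++ mkQ m P') ++
            (List.zipWith (fun g P' => (mkQ m P').drop (m - g)) gs Ps).flatten := by
            simp [List.append_assoc]
        _ = Z ++ (mkQ m P ++ (mkQ m P').drop (m - g)) ++
            (List.zipWith (fun g P' => (mkQ m P').drop (m - g)) gs Ps).flatten := by rw [h2]
        _ = Z ++ mkQ m P ++ ((mkQ m P').drop (m - g) ++
            (List.zipWith (fun g P' => (mkQ m P').drop (m - g)) gs Ps).flatten) := by
            simp [List.append_assoc]


lemma blk_cons {m : ℕ} (P : List ℕ) :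
    blk m P = Vf m P 0 :: (List.range m).map (Vf m P ∘ Nat.succ) := by
  rw [blk, List.range_succ_eq_map, List.map_cons, List.map_map]

lemma zipWith_replicate_one {f : ℕ → List ℕ → List ℕ} :
    ∀ (m : ℕ) (l : List (List ℕ)), l.length = m →
      List.zipWith f (List.replicate m 1) l = l.map (f 1) := by
  intro m
  induction m with
  | zero => intro l hl; rw [List.length_eq_zero_iff] at hl; subst hl; simp
  | succ k ih =>
    intro l hl
    cases l with
    | nil => simp at hl
    | cons x t =>
      rw [List.replicate_succ, List.zipWith_cons_cons, List.map_cons, ih t (by simpa using hl)]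

lemma flatten_take_one : ∀ (P : List ℕ),
    ((List.range P.length).map (fun i => (P.drop i).take 1)).flatten = P := by
  intro P
  induction P with
  | nil => simp
  | cons x t ih =>
    rw [List.length_cons, List.range_succ_eq_map, List.map_cons, List.map_map,
      List.flatten_cons]
    have h2 : ((x :: t).drop 0).take 1 = [x] := by simp
    have h3 : (List.range t.length).map ((fun i => ((x :: t).drop i).take 1) ∘ Nat.succ)
        = (List.range t.length).map (fun i => (t.drop i).take 1) := by
      apply List.map_congr_left
      intro i _
      simp [Function.comp, List.drop_succ_cons]
    rw [h2, h3, ih]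
    rfl

lemma drop_m_Vf {m : ℕ} {P : List ℕ} (hPl : P.length = m) {i : ℕ} (hi : i < m) :
    (Vf m P (i + 1)).drop m = (P.drop i).take 1 := by
  unfold Vf
  have hlen : (P.drop (i + 1)).length = m - i - 1 := by rw [List.length_drop, hPl]; omega
  have hsplit : m = (P.drop (i + 1)).length + (i + 1) := by omega
  rw [hsplit, List.drop_length_add_append, List.drop_succ_cons, List.drop_take]
  congr 1
  omega

lemma asm_blk {m : ℕ} {P : List ℕ} (hPl : P.length = m)
    (L : List (List ℕ)) (t : List ℕ) :
    asm (m + 1) (blk m P ++ L) (List.replicate m 1 ++ t)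
      = mkQ m P ++ (List.zipWith (fun g V => V.drop (m + 1 - g)) t L).flatten := by
  rw [blk_cons, List.cons_append]
  show Vf m P 0 ++ _ = _
  rw [List.zipWith_append (by simp), List.flatten_append]
  have h1 : List.zipWith (fun g V => V.drop (m + 1 - g)) (List.replicate m 1)
        ((List.range m).map (Vf m P ∘ Nat.succ))
      = ((List.range m).map (Vf m P ∘ Nat.succ)).map (fun V => V.drop (m + 1 - 1)) :=
    zipWith_replicate_one m _ (by simp)
  rw [h1, List.map_map]
  have h2 : ((List.range m).map ((fun V => V.drop (m + 1 - 1)) ∘ (Vf m P ∘ Nat.succ)))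
      = (List.range m).map (fun i => (P.drop i).take 1) := by
    apply List.map_congr_left
    intro i hi
    rw [List.mem_range] at hi
    have : m + 1 - 1 = m := by omega
    simp only [Function.comp_apply, this]
    exact drop_m_Vf hPl hi
  rw [h2]
  have h3 : ((List.range m).map (fun i => (P.drop i).take 1)).flatten = P := by
    rw [← hPl]; exact flatten_take_one P
  rw [h3, Vf_zero]
  simp [mkQ]

lemma asm_psAux {m : ℕ} (hm : 1 ≤ m) :
    ∀ (Ps : List (List ℕ)) (gs : List ℕ) (P : List ℕ),
      (∀ Q ∈ P :: Ps, Q.Perm (List.range' 1 m)) → Chain2 (Step m) (P :: Ps) gs →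
      asm (m + 1) (psAux m (P :: Ps)) (gsAux m gs)
        = mkQ m P ++ (List.zipWith (fun g P' => (mkQ m P').drop (m - g)) gs Ps).flatten := by
  intro Ps
  induction Ps with
  | nil =>
    intro gs P hperm hchain
    cases gs with
    | nil =>
      have hPl := perm_length (hperm P (by simp))
      have h0 : psAux m [P] = blk m P ++ [] := by simp [psAux]
      have h1 : gsAux m [] = List.replicate m 1 ++ [] := by simp [gsAux]
      rw [h0, h1, asm_blk hPl]
      simp
    | cons g gs => exact absurd hchain (by simp)
  | cons P' Ps ih =>
    intro gs P hperm hchain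
    cases gs with
    | nil => exact absurd hchain (by simp)
    | cons g gs =>
      obtain ⟨hstep, hchain'⟩ := hchain
      have hPl := perm_length (hperm P (by simp))
      have hP'l := perm_length (hperm P' (by simp))
      have h0 : psAux m (P :: P' :: Ps) = blk m P ++ psAux m (P' :: Ps) := by simp [psAux]
      have h1 : gsAux m (g :: gs) = List.replicate m 1 ++ (g + 1) :: gsAux m gs := rfl
      rw [h0, h1, asm_blk hPl]
      -- expose head of psAux m (P' :: Ps)
      have h2 : psAux m (P' :: Ps)
          = Vf m P' 0 :: ((List.range m).map (Vf m P' ∘ Nat.succ) ++ psAux m Ps) := by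
        simp [psAux, blk_cons]
      have ihe := ih gs P' (fun Q hQ => hperm Q (List.mem_cons_of_mem _ hQ)) hchain'
      rw [h2] at ihe ⊢
      rw [List.zipWith_cons_cons, List.flatten_cons]
      -- ihe : Vf m P' 0 ++ flatten (zipWith f (gsAux m gs) rest) = mkQ m P' ++ E'
      have ihe' : Vf m P' 0 ++
            (List.zipWith (fun g V => V.drop (m + 1 - g)) (gsAux m gs)
              ((List.range m).map (Vf m P' ∘ Nat.succ) ++ psAux m Ps)).flatten
          = mkQ m P' ++
            (List.zipWith (fun g P' => (mkQ m P').drop (m - g)) gs Ps).flatten := by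
        rw [← ihe]; rfl
      have hdrop := congrArg (List.drop (m - g)) ihe'
      rw [List.drop_append_of_le_length (by rw [Vf_zero]; simp [hP'l]; omega),
        List.drop_append_of_le_length (by rw [mkQ_length hP'l]; omega)] at hdrop
      have harith : m + 1 - (g + 1) = m - g := by omega
      rw [harith, hdrop]
      simp [List.append_assoc]


lemma chain2_map_range {R : List ℕ → ℕ → List ℕ → Prop} :
    ∀ (k : ℕ) (f : ℕ → List ℕ), (∀ i, i + 1 < k → R (f i) 1 (f (i + 1))) →
      Chain2 R ((List.range k).map f) (List.replicate (k - 1) 1) := by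
  intro k
  induction k with
  | zero => intro f _; simp [Chain2]
  | succ k ih =>
    intro f hf
    cases k with
    | zero => simp [Chain2]
    | succ k' =>
      have h1 : (List.range (k' + 2)).map f
          = f 0 :: (List.range (k' + 1)).map (f ∘ Nat.succ) := by
        rw [List.range_succ_eq_map, List.map_cons, List.map_map]
      have h2 : (List.range (k' + 1)).map (f ∘ Nat.succ)
          = f 1 :: (List.range k').map (f ∘ Nat.succ ∘ Nat.succ) := by
        rw [List.range_succ_eq_map, List.map_cons, List.map_map]
        rfl
      have ihr := ih (f ∘ Nat.succ) (fun i hi => hf (i + 1) (by omega))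
      rw [h2] at ihr
      rw [h1, h2]
      have hrep : List.replicate (k' + 2 - 1) 1 = 1 :: List.replicate (k' + 1 - 1) 1 := by
        simp [List.replicate_succ]
      rw [hrep]
      exact ⟨hf 0 (by omega), ihr⟩

lemma chain2_blk {m : ℕ} {P : List ℕ} (hm : 1 ≤ m) (hP : P.Perm (List.range' 1 m)) :
    Chain2 (Step (m + 1)) (blk m P) (List.replicate m 1) := by
  have := chain2_map_range (m + 1) (Vf m P)
    (fun i hi => step_inside hm hP (by omega))
  simpa [blk] using this

lemma chain2_glue {R : List ℕ → ℕ → List ℕ → Prop} :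
    ∀ (xs' : List (List ℕ)) (x : List ℕ) (as : List ℕ) (b : ℕ) (y : List ℕ)
      (ys : List (List ℕ)) (bs : List ℕ),
      Chain2 R (xs' ++ [x]) as → R x b y → Chain2 R (y :: ys) bs →
      Chain2 R ((xs' ++ [x]) ++ y :: ys) (as ++ b :: bs) := by
  intro xs'
  induction xs' with
  | nil =>
    intro x as b y ys bs h1 h2 h3
    cases as with
    | nil => exact ⟨h2, h3⟩
    | cons a as => exact absurd h1 (by simp)
  | cons x1 xs' ih =>
    intro x as b y ys bs h1 h2 h3
    cases xs' with
    | nil =>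
      cases as with
      | nil => exact absurd h1 (by simp)
      | cons a as =>
        obtain ⟨hr, hc⟩ := h1
        cases as with
        | nil => exact ⟨hr, h2, h3⟩
        | cons a' as' => exact absurd hc (by simp)
    | cons x2 xs'' =>
      cases as with
      | nil => exact absurd h1 (by simp)
      | cons a as =>
        obtain ⟨hr, hc⟩ := h1
        exact ⟨hr, ih x as b y ys bs hc h2 h3⟩

lemma chain_psAux {m : ℕ} (hm : 1 ≤ m) :
    ∀ (Ps : List (List ℕ)) (gs : List ℕ) (P : List ℕ),
      (∀ Q ∈ P :: Ps, Q.Perm (List.range' 1 m)) → Chain2 (Step m) (P :: Ps) gs →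
      Chain2 (Step (m + 1)) (psAux m (P :: Ps)) (gsAux m gs) := by
  intro Ps
  induction Ps with
  | nil =>
    intro gs P hperm hchain
    cases gs with
    | nil =>
      have h0 : psAux m [P] = blk m P := by simp [psAux]
      rw [h0]
      exact chain2_blk hm (hperm P (by simp))
    | cons g gs => exact absurd hchain (by simp)
  | cons P' Ps ih =>
    intro gs P hperm hchain
    cases gs with
    | nil => exact absurd hchain (by simp)
    | cons g gs =>
      obtain ⟨hstep, hchain'⟩ := hchain
      have hP := hperm P (by simp)
      have hP' := hperm P' (by simp)
      have hPl := perm_length hP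
      have h0 : psAux m (P :: P' :: Ps) = blk m P ++ psAux m (P' :: Ps) := by simp [psAux]
      have h1 : gsAux m (g :: gs) = List.replicate m 1 ++ (g + 1) :: gsAux m gs := rfl
      have hblk : blk m P = (List.range m).map (Vf m P) ++ [Vf m P m] := by
        rw [blk, List.range_succ, List.map_append, List.map_singleton]
      have h2 : psAux m (P' :: Ps)
          = Vf m P' 0 :: ((List.range m).map (Vf m P' ∘ Nat.succ) ++ psAux m Ps) := by
        simp [psAux, blk_cons]
      have ihr := ih gs P' (fun Q hQ => hperm Q (List.mem_cons_of_mem _ hQ)) hchain'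
      rw [h2] at ihr
      rw [h0, h1, hblk, h2]
      apply chain2_glue
      · rw [← hblk]; exact chain2_blk hm hP
      · exact step_between hm hP hP' hstep
      · exact ihr

lemma gsAux_length {m : ℕ} : ∀ gs : List ℕ, (gsAux m gs).length = m + (m + 1) * gs.length := by
  intro gs
  induction gs with
  | nil => simp [gsAux]
  | cons g gs ih =>
    simp only [gsAux, List.length_append, List.length_replicate, List.length_cons, ih,
      List.length_cons]
    rw [Nat.mul_succ]
    omega

lemma psAux_length {m : ℕ} : ∀ Ps : List (List ℕ),
    (psAux m Ps).length = (m + 1) * Ps.length := by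
  intro Ps
  induction Ps with
  | nil => simp [psAux]
  | cons P Ps ih =>
    have : psAux m (P :: Ps) = blk m P ++ psAux m Ps := by simp [psAux]
    rw [this, List.length_append, ih]
    simp only [blk, List.length_map, List.length_range, List.length_cons]
    rw [Nat.mul_succ]
    omega

lemma chain_g_le {n : ℕ} : ∀ (Ps : List (List ℕ)) (gs : List ℕ),
    Chain2 (Step n) Ps gs → ∀ g ∈ gs, g ≤ n := by
  intro Ps
  induction Ps with
  | nil => intro gs h g hg; cases gs with
    | nil => simp at hg
    | cons a b => exact absurd h (by simp)
  | cons P Ps ih =>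
    intro gs h g hg
    cases Ps with
    | nil => cases gs with
      | nil => simp at hg
      | cons a b => exact absurd h (by simp)
    | cons P' Ps' =>
      cases gs with
      | nil => simp at hg
      | cons a b =>
        obtain ⟨hstep, hchain⟩ := h
        rcases List.mem_cons.mp hg with rfl | hg'
        · exact hstep.2.1
        · exact ih b hchain g hg'

lemma flatten_chunks_length {m : ℕ} : ∀ (gs : List ℕ) (Ps : List (List ℕ)),
    (∀ P ∈ Ps, P.length = m) → (∀ g ∈ gs, g ≤ m) → gs.length = Ps.length →
    ((List.zipWith (fun g P' => (mkQ m P').drop (m - g)) gs Ps).flatten).length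
      = (m + 1) * gs.length + gs.sum := by
  intro gs
  induction gs with
  | nil => intro Ps _ _ _; simp
  | cons g gs ih =>
    intro Ps hP hg hl
    cases Ps with
    | nil => simp at hl
    | cons P Ps' =>
      rw [List.zipWith_cons_cons, List.flatten_cons, List.length_append,
        ih Ps' (fun Q hQ => hP Q (by simp [hQ])) (fun x hx => hg x (by simp [hx]))
          (by simpa using hl)]
      have hPl : P.length = m := hP P (by simp)
      have hgl : g ≤ m := hg g (by simp)
      rw [List.length_drop, mkQ_length hPl]
      simp only [List.sum_cons, List.length_cons]
      rw [Nat.mul_succ]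
      omega

lemma asm_length {n : ℕ} : ∀ (Ps : List (List ℕ)) (gs : List ℕ) (P : List ℕ),
    (∀ Q ∈ P :: Ps, Q.length = n) → Chain2 (Step n) (P :: Ps) gs →
    (asm n (P :: Ps) gs).length = n + gs.sum := by
  intro Ps
  induction Ps with
  | nil =>
    intro gs P hlen hchain
    cases gs with
    | nil => simp [asm, hlen P (by simp)]
    | cons g gs => exact absurd hchain (by simp)
  | cons P' Ps ih =>
    intro gs P hlen hchain
    cases gs with
    | nil => exact absurd hchain (by simp)
    | cons g gs =>
      obtain ⟨hstep, hchain'⟩ := hchain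
      rw [asm_cons hstep.2.2.1, List.length_append,
        ih gs P' (fun Q hQ => hlen Q (List.mem_cons_of_mem _ hQ)) hchain']
      rw [List.length_take, hlen P (by simp)]
      have := hstep.2.1
      have := hstep.1
      simp only [List.sum_cons]
      omega


theorem step_rep {m : ℕ} {M : List ℕ} {Ps : List (List ℕ)} {gs : List ℕ}
    (hm : 1 ≤ m) (h : Rep m M Ps gs) :
    Rep (m + 1) ((Ps.map (fun P => P ++ [m + 1] ++ P)).foldl mergeOv [])
      (psAux m Ps) (gsAux m gs) := by
  obtain ⟨P0, Ps', rfl⟩ : ∃ P0 Ps', Ps = P0 :: Ps' := by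
    cases Ps with
    | nil =>
      exfalso
      have h1 := h.count
      simp only [List.length_nil] at h1
      have h2 := Nat.factorial_pos m
      omega
    | cons P0 Ps' => exact ⟨P0, Ps', rfl⟩
  have hP0 := h.perm P0 (by simp)
  have hP0l := perm_length hP0
  have hgsl : gs.length = Ps'.length := by have := h.glen; simpa using this
  have hE : ((P0 :: Ps').map (fun P => P ++ [m + 1] ++ P)).foldl mergeOv []
      = mkQ m P0 ++
        (List.zipWith (fun g P' => (mkQ m P').drop (m - g)) gs Ps').flatten := by
    have hmap : (fun P : List ℕ => P ++ [m + 1] ++ P) = mkQ m := by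
      funext P; simp [mkQ]
    rw [hmap, List.map_cons, List.foldl_cons, mergeOv_nil]
    have hf := foldl_merge hm Ps' gs P0 [] h.perm h.chain
    simpa using hf
  refine ⟨?_, ?_, ?_, ?_, ?_, ?_, ?_⟩
  · -- perm
    intro V hV
    rw [psAux, List.mem_flatMap] at hV
    obtain ⟨P, hPmem, hVb⟩ := hV
    rw [blk, List.mem_map] at hVb
    obtain ⟨i, hir, rfl⟩ := hVb
    rw [List.mem_range] at hir
    have hp := h.perm P hPmem
    have p1 : (Vf m P i).Perm ((m + 1) :: (P.drop i ++ P.take i)) := List.perm_middle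
    have p2 : (P.drop i ++ P.take i).Perm P := by
      have := List.perm_append_comm (l₁ := P.drop i) (l₂ := P.take i)
      rwa [List.take_append_drop] at this
    have p3 : ((m + 1) :: P).Perm (P ++ [m + 1]) := by
      simpa using (List.perm_middle (a := m + 1) (l₁ := P) (l₂ := [])).symm
    have p4 : (P ++ [m + 1]).Perm (List.range' 1 m ++ [m + 1]) := hp.append_right [m + 1]
    have p5 : List.range' 1 m ++ [m + 1] = List.range' 1 (m + 1) := by
      have harith : 1 + 1 * m = m + 1 := by omega
      rw [List.range'_concat, harith]
    rw [← p5]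
    exact p1.trans ((p2.cons _).trans (p3.trans p4))
  · -- nodup
    rw [psAux]
    apply List.nodup_flatMap.mpr
    constructor
    · intro P hPmem
      rw [blk]
      refine List.Nodup.map_on ?_ List.nodup_range
      intro i hi j hj heq
      rw [List.mem_range] at hi hj
      exact (Vf_inj (h.perm P hPmem) (h.perm P hPmem) (by omega) (by omega) heq).1
    · refine List.Pairwise.imp_of_mem ?_ h.nodup
      intro a b ha hb hne
      intro V hVa hVb
      rw [blk, List.mem_map] at hVa hVb
      obtain ⟨i, hi, rfl⟩ := hVa
      obtain ⟨j, hj, heq⟩ := hVb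
      rw [List.mem_range] at hi hj
      exact hne ((Vf_inj (h.perm a ha) (h.perm b hb) (by omega) (by omega) heq.symm).2)
  · -- count
    rw [psAux_length, h.count, Nat.factorial_succ]
  · -- glen
    rw [gsAux_length, psAux_length]
    have h1 : (m + 1) * (P0 :: Ps').length = (m + 1) * gs.length + (m + 1) := by
      rw [List.length_cons, ← hgsl, Nat.mul_succ]
    rw [h1]
    omega
  · -- chain
    exact chain_psAux hm Ps' gs P0 h.perm h.chain
  · -- meq
    rw [hE]
    exact (asm_psAux hm Ps' gs P0 h.perm h.chain).symm
  · -- mlen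
    rw [hE, List.length_append, mkQ_length hP0l,
      flatten_chunks_length gs Ps'
        (fun Q hQ => perm_length (h.perm Q (List.mem_cons_of_mem _ hQ)))
        (chain_g_le _ _ h.chain) hgsl,
      Finset.sum_Icc_succ_top (by omega : 1 ≤ m + 1), ← h.mlen]
    have hMl : M.length = m + gs.sum := by
      rw [h.meq]
      exact asm_length Ps' gs P0 (fun Q hQ => perm_length (h.perm Q hQ)) h.chain
    have hfacL : m.factorial = gs.length + 1 := by
      have h1 := h.count
      rw [List.length_cons] at h1
      omega
    rw [hMl, Nat.factorial_succ, hfacL, Nat.mul_succ]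
    generalize (m + 1) * gs.length = X
    omega

theorem rep_Mrec : ∀ n : ℕ, 1 ≤ n → ∃ Ps gs, Rep n (Mrec n) Ps gs := by
  intro n
  induction n with
  | zero => omega
  | succ k ih =>
    intro _
    cases k with
    | zero =>
      refine ⟨[[1]], [], ?_, ?_, ?_, ?_, ?_, ?_, ?_⟩
      · intro P hP; simp at hP; subst hP; rfl
      · simp
      · simp
      · simp
      · simp
      · simp [Mrec, asm]
      · simp [Mrec]
    | succ k' =>
      obtain ⟨Ps, gs, hrep⟩ := ih (by omega)
      refine ⟨psAux (k' + 1) Ps, gsAux (k' + 1) gs, ?_⟩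
      have hstep := step_rep (by omega) hrep
      have hM : Mrec (k' + 2)
          = ((permsOrder (k' + 1) (Mrec (k' + 1))).map
              fun P => P ++ [k' + 2] ++ P).foldl mergeOv [] := rfl
      rw [hM, permsOrder_eq (by omega) hrep]
      exact hstep

end SuperPerm

theorem stmt7 (n : ℕ) (hn : 1 ≤ n) :
    (Mrec n).length = ∑ k ∈ Finset.Icc 1 n, Nat.factorial k := by
  obtain ⟨Ps, gs, h⟩ := SuperPerm.rep_Mrec n hn
  exact h.mlen
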